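/- arXiv:1311.2337 — 3 statements merged into one kernel-verified Lean document; each statement's English description precedes it below -/
import Mathlib

section
/- Fix P > 0. Let X be uniformly distributed on the sphere {x ∈ ℝⁿ : ‖x‖₂² = nP}, let Z ∼ N(0, I_{n×n}) be a standard Gaussian vector in ℝⁿ independent of X, and let Y = X + Z. Then there exist κ > 0 and N ∈ ℕ such that for all n ≥ N, Pr( | (1/n)·‖Y‖₂² − (P+1) | > n^{−1/3} ) ≤ exp(−κ·n^{1/3}). -/
set_option maxHeartbeats 1000000

open MeasureTheory ProbabilityTheory Real
open scoped ENNReal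
open scoped NNReal

noncomputable section

/-- The standard Gaussian measure `N(0, I_{n×n})` on `ℝⁿ`. -/
def stdGaussian (n : ℕ) : Measure (Fin n → ℝ) := Measure.pi fun _ : Fin n => gaussianReal 0 1

/-- The uniform (normalized surface / Haar) distribution on the sphere
`{x ∈ ℝⁿ : ‖x‖₂² = nP}`, realized as the pushforward of the rotation-invariant standard
Gaussian measure under radial projection onto the sphere of radius `√(nP)`. -/
def sphereUniform (n : ℕ) (P : ℝ) : Measure (Fin n → ℝ) :=
  Measure.map (fun z => (Real.sqrt (n * P) / Real.sqrt (∑ i, z i ^ 2)) • z) (stdGaussian n)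

lemma integrable_rexp_quadratic {b : ℝ} (hb : b < 0) (c : ℝ) :
    Integrable (fun x : ℝ => rexp (b * x ^ 2 + c * x)) := by
  have h := (integrable_cexp_quadratic' (b := (b : ℂ)) (by simpa using hb) (c : ℂ) 0).norm
  refine h.congr (Filter.Eventually.of_forall fun x => ?_)
  have e : ((b : ℂ) * (x:ℝ) ^ 2 + (c:ℂ) * (x:ℝ) + 0) = ((b * x ^ 2 + c * x : ℝ) : ℂ) := by
    push_cast; ring
  simp only [e, Complex.norm_exp, Complex.ofReal_re]

lemma integral_rexp_quadratic {b : ℝ} (hb : b < 0) (c : ℝ) :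
    ∫ x : ℝ, rexp (b * x ^ 2 + c * x) = Real.sqrt (π / (-b)) * rexp (-(c ^ 2) / (4 * b)) := by
  have h := integral_cexp_quadratic (b := (b : ℂ)) (by simpa using hb) (c : ℂ) 0
  have hL : (∫ x : ℝ, Complex.exp ((b:ℂ) * (x:ℝ) ^ 2 + (c:ℂ) * (x:ℝ) + 0))
      = ((∫ x : ℝ, rexp (b * x ^ 2 + c * x) : ℝ) : ℂ) := by
    have key : ∀ x : ℝ, ((b : ℂ) * (x:ℝ) ^ 2 + (c:ℂ) * (x:ℝ) + 0)
        = ((b * x ^ 2 + c * x : ℝ) : ℂ) := fun x => by push_cast; ring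
    simp_rw [key, ← Complex.ofReal_exp]
    exact integral_ofReal
  have hpos : (0:ℝ) ≤ π / (-b) := div_nonneg pi_pos.le (by linarith)
  have hR : ((π : ℂ) / -(b:ℂ)) ^ (1 / 2 : ℂ) * Complex.exp (0 - (c:ℂ) ^ 2 / (4 * (b:ℂ)))
      = ((Real.sqrt (π / (-b)) * rexp (-(c ^ 2) / (4 * b)) : ℝ) : ℂ) := by
    have h1 : ((π : ℂ) / -(b:ℂ)) = ((π / (-b) : ℝ) : ℂ) := by push_cast; ring
    have h3 : ((1:ℂ)/2) = (((1:ℝ)/2 : ℝ) : ℂ) := by norm_num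
    have h2 : (0 - (c:ℂ) ^ 2 / (4 * (b:ℂ))) = ((-(c ^ 2) / (4 * b) : ℝ) : ℂ) := by
      push_cast; ring
    rw [h1, h3, ← Complex.ofReal_cpow hpos, h2, ← Complex.ofReal_exp, ← Complex.ofReal_mul]
    norm_cast
    rw [Real.sqrt_eq_rpow]
  rw [hL, hR] at h
  exact_mod_cast h

open scoped NNReal ENNReal

lemma pdf_toReal (x : ℝ) : (gaussianPDF 0 1 x).toReal = (√(2 * π))⁻¹ * rexp (-(x ^ 2) / 2) := by
  rw [gaussianPDF, ENNReal.toReal_ofReal (gaussianPDFReal_nonneg 0 1 x), gaussianPDFReal]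
  norm_num

lemma integrable_exp_quad_gaussian {b : ℝ} (hb : b < 1/2) (c : ℝ) :
    Integrable (fun y : ℝ => rexp (b * y ^ 2 + c * y)) (gaussianReal 0 1) := by
  rw [gaussianReal_of_var_ne_zero 0 one_ne_zero,
    integrable_withDensity_iff (measurable_gaussianPDF 0 1)
      (Filter.Eventually.of_forall fun x => ENNReal.ofReal_lt_top)]
  have e : ∀ x : ℝ, rexp (b * x ^ 2 + c * x) * (gaussianPDF 0 1 x).toReal
      = (√(2 * π))⁻¹ * rexp ((b - 1/2) * x ^ 2 + c * x) := by
    intro x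
    rw [pdf_toReal, mul_comm, mul_assoc, ← Real.exp_add]
    congr 2
    ring
  simp_rw [e]
  exact (integrable_rexp_quadratic (by linarith) c).const_mul _

lemma integral_exp_quad_gaussian {b : ℝ} (hb : b < 1/2) (c : ℝ) :
    ∫ y, rexp (b * y ^ 2 + c * y) ∂(gaussianReal 0 1)
      = Real.sqrt ((1 - 2 * b)⁻¹) * rexp (c ^ 2 / (2 * (1 - 2 * b))) := by
  rw [gaussianReal_of_var_ne_zero 0 one_ne_zero]
  have hPDF : gaussianPDF 0 1
      = fun x => ((Real.toNNReal (gaussianPDFReal 0 1 x) : ℝ≥0) : ℝ≥0∞) := by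
    ext x; rw [gaussianPDF, ENNReal.ofReal]
  rw [hPDF, integral_withDensity_eq_integral_smul
    ((measurable_gaussianPDFReal 0 1).real_toNNReal) _]
  have pdfReal_eq : ∀ x : ℝ, gaussianPDFReal 0 1 x = (√(2 * π))⁻¹ * rexp (-(x ^ 2) / 2) := by
    intro x; rw [gaussianPDFReal]; norm_num
  have e : ∀ x : ℝ, (Real.toNNReal (gaussianPDFReal 0 1 x)) • rexp (b * x ^ 2 + c * x)
      = (√(2 * π))⁻¹ * rexp ((b - 1/2) * x ^ 2 + c * x) := by
    intro x
    rw [NNReal.smul_def, smul_eq_mul, Real.coe_toNNReal _ (gaussianPDFReal_nonneg 0 1 x),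
      pdfReal_eq, mul_assoc, ← Real.exp_add]
    congr 2
    ring
  simp_rw [e, integral_const_mul, integral_rexp_quadratic (show b - 1/2 < 0 by linarith) c]
  rw [← mul_assoc]
  congr 1
  · rw [← Real.sqrt_inv, ← Real.sqrt_mul (by positivity)]
    congr 1
    have h1 : (1:ℝ) - 2*b ≠ 0 := by linarith
    have h2 : -(b - 1/2) ≠ 0 := by linarith
    rw [show (1 - 2*b)⁻¹ = 1 / (1 - 2*b) from (one_div _).symm, eq_div_iff h1]
    have h3 : π * 2 - π * b * 4 ≠ 0 := by
      have : π * 2 - π * b * 4 = (2*π) * (1 - 2*b) := by ring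
      rw [this]
      exact mul_ne_zero (by positivity) h1
    field_simp [h2, h3, Real.pi_ne_zero]
    have h5 : (2*b - 1 : ℝ) ≠ 0 := by intro h; exact h1 (by linarith)
    rw [neg_eq_iff_eq_neg, div_eq_iff h5]
    ring
  · congr 1
    have h4 : (4:ℝ)*(b-1/2) = -(2*(1-2*b)) := by ring
    rw [h4, div_neg, neg_div, neg_neg]

instance stdGaussian_prob (n : ℕ) : IsProbabilityMeasure (stdGaussian n) := by
  unfold _root_.stdGaussian; infer_instance

lemma integrable_coord {s : ℝ} (hs : s < 1/2) (a : ℝ) :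
    Integrable (fun y : ℝ => rexp (s * (a + y) ^ 2)) (gaussianReal 0 1) := by
  have e : ∀ y : ℝ, rexp (s * (a + y) ^ 2)
      = rexp (s * a ^ 2) * rexp (s * y ^ 2 + (2*s*a) * y) := by
    intro y; rw [← Real.exp_add]; congr 1; ring
  simp_rw [e]
  exact (integrable_exp_quad_gaussian hs (2*s*a)).const_mul _

lemma integral_coord {s : ℝ} (hs : s < 1/2) (a : ℝ) :
    ∫ y, rexp (s * (a + y) ^ 2) ∂(gaussianReal 0 1)
      = Real.sqrt ((1 - 2*s)⁻¹) * rexp (s * a ^ 2 / (1 - 2*s)) := by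
  have e : ∀ y : ℝ, rexp (s * (a + y) ^ 2)
      = rexp (s * a ^ 2) * rexp (s * y ^ 2 + (2*s*a) * y) := by
    intro y; rw [← Real.exp_add]; congr 1; ring
  simp_rw [e, integral_const_mul, integral_exp_quad_gaussian hs]
  rw [mul_left_comm, ← Real.exp_add]
  congr 2
  have h1 : (1:ℝ) - 2*s ≠ 0 := by linarith
  field_simp
  have h1' : (1:ℝ) - s*2 ≠ 0 := by linarith
  have hinv : (1 - s*2)⁻¹ * (1 - s*2) = 1 := inv_mul_cancel₀ h1'
  linear_combination (-(s*a^2)) * hinv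

lemma integrable_W (n : ℕ) (x : Fin n → ℝ) {s : ℝ} (hs : s < 1/2) :
    Integrable (fun z : Fin n → ℝ => rexp (s * ∑ i, (x i + z i) ^ 2)) (stdGaussian n) := by
  letI : MeasureSpace ℝ := ⟨gaussianReal 0 1⟩
  haveI : SigmaFinite (volume : Measure ℝ) := inferInstanceAs (SigmaFinite (gaussianReal 0 1))
  have e : ∀ z : Fin n → ℝ, rexp (s * ∑ i, (x i + z i) ^ 2)
      = ∏ i, rexp (s * (x i + z i) ^ 2) := by
    intro z; rw [Finset.mul_sum, Real.exp_sum]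
  simp_rw [e]
  exact Integrable.fintype_prod (f := fun i y => rexp (s * (x i + y) ^ 2))
    (fun i => integrable_coord hs (x i))

lemma integral_W (n : ℕ) (x : Fin n → ℝ) {s : ℝ} (hs : s < 1/2) :
    ∫ z, rexp (s * ∑ i, (x i + z i) ^ 2) ∂(stdGaussian n)
      = Real.sqrt ((1 - 2*s)⁻¹) ^ n * rexp (s * (∑ i, x i ^ 2) / (1 - 2*s)) := by
  letI : MeasureSpace ℝ := ⟨gaussianReal 0 1⟩
  haveI : SigmaFinite (volume : Measure ℝ) := inferInstanceAs (SigmaFinite (gaussianReal 0 1))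
  have e : ∀ z : Fin n → ℝ, rexp (s * ∑ i, (x i + z i) ^ 2)
      = ∏ i, rexp (s * (x i + z i) ^ 2) := by
    intro z; rw [Finset.mul_sum, Real.exp_sum]
  simp_rw [e]
  rw [show (stdGaussian n) = Measure.pi (fun _ : Fin n => (volume : Measure ℝ)) from rfl,
    integral_fintype_prod_eq_prod (fun i y => rexp (s * (x i + y) ^ 2))]
  have hprod : (∏ i, ∫ y : ℝ, rexp (s * (x i + y) ^ 2))
      = ∏ i, (Real.sqrt ((1 - 2*s)⁻¹) * rexp (s * x i ^ 2 / (1 - 2*s))) :=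
    Finset.prod_congr rfl (fun i _ => integral_coord hs (x i))
  rw [hprod, Finset.prod_mul_distrib, Finset.prod_const, Finset.card_univ, Fintype.card_fin,
    ← Real.exp_sum]
  congr 1
  rw [← Finset.sum_div, ← Finset.mul_sum]

lemma sqrt_ineq_up {s : ℝ} (h0 : 0 ≤ s) (h1 : s ≤ 1/10) :
    Real.sqrt ((1 - 2*s)⁻¹) ≤ rexp (s + 2*s^2) := by
  have h2 : (0:ℝ) < 1 - 2*s := by linarith
  have h3 : (1:ℝ) + (s + 2*s^2) ≤ rexp (s + 2*s^2) := by
    linarith [Real.add_one_le_exp (s + 2*s^2)]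
  have h4 : (0:ℝ) ≤ 1 + (s + 2*s^2) := by nlinarith
  have h5 : (1 + (s + 2*s^2))^2 ≤ rexp (s + 2*s^2)^2 := by nlinarith [Real.exp_pos (s + 2*s^2)]
  have key : (1 - 2*s)⁻¹ ≤ rexp (s + 2*s^2)^2 := by
    rw [← one_div, div_le_iff₀ h2]
    nlinarith [sq_nonneg s, sq_nonneg (s*s)]
  calc Real.sqrt ((1 - 2*s)⁻¹) ≤ Real.sqrt (rexp (s + 2*s^2)^2) := Real.sqrt_le_sqrt key
    _ = rexp (s + 2*s^2) := Real.sqrt_sq (Real.exp_pos _).le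

lemma sqrt_ineq_dn {s : ℝ} (h0 : 0 ≤ s) (h1 : s ≤ 1/10) :
    Real.sqrt ((1 + 2*s)⁻¹) ≤ rexp (-s + 2*s^2) := by
  have h2 : (0:ℝ) < 1 + 2*s := by linarith
  have h3 : (1:ℝ) + (-s + 2*s^2) ≤ rexp (-s + 2*s^2) := by
    linarith [Real.add_one_le_exp (-s + 2*s^2)]
  have h4 : (0:ℝ) ≤ 1 + (-s + 2*s^2) := by nlinarith
  have h5 : (1 + (-s + 2*s^2))^2 ≤ rexp (-s + 2*s^2)^2 := by
    nlinarith [Real.exp_pos (-s + 2*s^2)]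
  have key : (1 + 2*s)⁻¹ ≤ rexp (-s + 2*s^2)^2 := by
    rw [← one_div, div_le_iff₀ h2]
    nlinarith [sq_nonneg s, sq_nonneg (s*s)]
  calc Real.sqrt ((1 + 2*s)⁻¹) ≤ Real.sqrt (rexp (-s + 2*s^2)^2) := Real.sqrt_le_sqrt key
    _ = rexp (-s + 2*s^2) := Real.sqrt_sq (Real.exp_pos _).le

lemma chernoff_up (n : ℕ) (x : Fin n → ℝ) {s : ℝ} (h0 : 0 ≤ s) (h1 : s ≤ 1/10)
    {P : ℝ} (hP : 0 < P) (hx : ∑ i, x i ^ 2 = n * P) (u : ℝ) :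
    ((stdGaussian n) {z | n*(P+1) + u ≤ ∑ i, (x i + z i) ^ 2}).toReal
      ≤ rexp (-(s*u) + 2*n*s^2*(1+2*P)) := by
  have hs2 : s < 1/2 := by linarith
  have hnP : (0:ℝ) ≤ s * (n * P) := by positivity
  refine (measure_ge_le_exp_mul_mgf (μ := stdGaussian n)
      (X := fun z => ∑ i, (x i + z i) ^ 2) (n*(P+1) + u) h0 (integrable_W n x hs2)).trans ?_
  have hmgf : mgf (fun z => ∑ i, (x i + z i) ^ 2) (stdGaussian n) s
      = Real.sqrt ((1 - 2*s)⁻¹) ^ n * rexp (s * (n*P) / (1 - 2*s)) := by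
    rw [mgf, ← hx]
    exact integral_W n x hs2
  rw [hmgf]
  have hA : Real.sqrt ((1 - 2*s)⁻¹) ^ n ≤ rexp (n * (s + 2*s^2)) := by
    rw [Real.exp_nat_mul]
    exact pow_le_pow_left₀ (Real.sqrt_nonneg _) (sqrt_ineq_up h0 h1) n
  have hB : rexp (s * (n*P) / (1 - 2*s)) ≤ rexp (s * (n*P) * (1 + 4*s)) := by
    rw [Real.exp_le_exp, div_le_iff₀ (by linarith : (0:ℝ) < 1 - 2*s)]
    nlinarith [mul_nonneg hnP (show (0:ℝ) ≤ 2*s - 8*s^2 by nlinarith)]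
  calc rexp (-s * (n*(P+1) + u)) * (Real.sqrt ((1 - 2*s)⁻¹) ^ n * rexp (s * (n*P) / (1 - 2*s)))
      ≤ rexp (-s * (n*(P+1) + u)) * (rexp (n * (s + 2*s^2)) * rexp (s * (n*P) * (1 + 4*s))) := by
        refine mul_le_mul_of_nonneg_left ?_ (Real.exp_pos _).le
        exact mul_le_mul hA hB (Real.exp_pos _).le (Real.exp_pos _).le
    _ = rexp (-s * (n*(P+1) + u) + (n * (s + 2*s^2) + s * (n*P) * (1 + 4*s))) := by
        rw [← Real.exp_add, ← Real.exp_add]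
    _ ≤ rexp (-(s*u) + 2*n*s^2*(1+2*P)) := by
        rw [Real.exp_le_exp]
        exact le_of_eq (by ring)

lemma chernoff_dn (n : ℕ) (x : Fin n → ℝ) {s : ℝ} (h0 : 0 ≤ s) (h1 : s ≤ 1/10)
    {P : ℝ} (hP : 0 < P) (hx : ∑ i, x i ^ 2 = n * P) (u : ℝ) :
    ((stdGaussian n) {z | ∑ i, (x i + z i) ^ 2 ≤ n*(P+1) - u}).toReal
      ≤ rexp (-(s*u) + 2*n*s^2*(1+2*P)) := by
  have hs2 : -s < 1/2 := by linarith
  have hnP : (0:ℝ) ≤ s * (n * P) := by positivity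
  refine (measure_le_le_exp_mul_mgf (μ := stdGaussian n)
      (X := fun z => ∑ i, (x i + z i) ^ 2) (n*(P+1) - u) (by linarith : -s ≤ 0)
      (integrable_W n x hs2)).trans ?_
  have hmgf : mgf (fun z => ∑ i, (x i + z i) ^ 2) (stdGaussian n) (-s)
      = Real.sqrt ((1 - 2*(-s))⁻¹) ^ n * rexp ((-s) * (n*P) / (1 - 2*(-s))) := by
    rw [mgf, ← hx]
    exact integral_W n x hs2
  rw [hmgf]
  have e1 : (1 - 2*(-s)) = 1 + 2*s := by ring
  rw [e1]
  have hA : Real.sqrt ((1 + 2*s)⁻¹) ^ n ≤ rexp (n * (-s + 2*s^2)) := by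
    rw [Real.exp_nat_mul]
    exact pow_le_pow_left₀ (Real.sqrt_nonneg _) (sqrt_ineq_dn h0 h1) n
  have hB : rexp ((-s) * (n*P) / (1 + 2*s)) ≤ rexp ((-s) * (n*P) * (1 - 2*s)) := by
    rw [Real.exp_le_exp, div_le_iff₀ (by linarith : (0:ℝ) < 1 + 2*s)]
    nlinarith [mul_nonneg hnP (sq_nonneg (2*s))]
  calc rexp (-(-s) * (n*(P+1) - u)) * (Real.sqrt ((1 + 2*s)⁻¹) ^ n * rexp ((-s) * (n*P) / (1 + 2*s)))
      ≤ rexp (-(-s) * (n*(P+1) - u)) * (rexp (n * (-s + 2*s^2)) * rexp ((-s) * (n*P) * (1 - 2*s))) := by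
        refine mul_le_mul_of_nonneg_left ?_ (Real.exp_pos _).le
        exact mul_le_mul hA hB (Real.exp_pos _).le (Real.exp_pos _).le
    _ = rexp (-(-s) * (n*(P+1) - u) + (n * (-s + 2*s^2) + (-s) * (n*P) * (1 - 2*s))) := by
        rw [← Real.exp_add, ← Real.exp_add]
    _ ≤ rexp (-(s*u) + 2*n*s^2*(1+2*P)) := by
        rw [Real.exp_le_exp]
        nlinarith [mul_nonneg (mul_nonneg h0 (mul_nonneg h0 (Nat.cast_nonneg n))) hP.le]

instance gaussian_noAtoms : NullSingletonClass (gaussianReal 0 1) :=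
  ⟨fun x => (gaussianReal_absolutelyContinuous 0 one_ne_zero) (measure_singleton x)⟩

lemma measurable_sumsq (n : ℕ) : Measurable (fun z : Fin n → ℝ => ∑ i, z i ^ 2) := by
  measurability

lemma measurable_proj (n : ℕ) (P : ℝ) :
    Measurable (fun z : Fin n → ℝ =>
      (Real.sqrt (n * P) / Real.sqrt (∑ i, z i ^ 2)) • z) := by
  exact (measurable_const.div ((measurable_sumsq n).sqrt)).smul measurable_id

instance sphere_prob (n : ℕ) (P : ℝ) : IsProbabilityMeasure (sphereUniform n P) := by
  rw [sphereUniform]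
  exact Measure.isProbabilityMeasure_map (measurable_proj n P).aemeasurable

lemma ae_sphere (n : ℕ) (hn : 1 ≤ n) (P : ℝ) (hP : 0 < P) :
    ∀ᵐ x ∂(sphereUniform n P), ∑ i, x i ^ 2 = n * P := by
  rw [sphereUniform, ae_map_iff (measurable_proj n P).aemeasurable
    (measurableSet_eq_fun (measurable_sumsq n) measurable_const)]
  have hz : ∀ᵐ z ∂(stdGaussian n), z ⟨0, hn⟩ ≠ 0 := by
    rw [ae_iff]
    have : {z : Fin n → ℝ | ¬ z ⟨0, hn⟩ ≠ 0} = Function.eval (⟨0, hn⟩ : Fin n) ⁻¹' {0} := by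
      ext z; simp
    rw [this, _root_.stdGaussian]
    exact Measure.pi_hyperplane _ _ 0
  filter_upwards [hz] with z hz0
  have hS : 0 < ∑ i, z i ^ 2 :=
    Finset.sum_pos' (fun i _ => sq_nonneg _)
      ⟨⟨0, hn⟩, Finset.mem_univ _, by positivity⟩
  simp only [Set.mem_setOf_eq, Pi.smul_apply, smul_eq_mul]
  have e : ∀ i : Fin n, (Real.sqrt (n * P) / Real.sqrt (∑ j, z j ^ 2) * z i) ^ 2
      = (n * P) / (∑ j, z j ^ 2) * z i ^ 2 := by
    intro i
    rw [mul_pow, div_pow, Real.sq_sqrt (by positivity : (0:ℝ) ≤ (n:ℝ) * P),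
      Real.sq_sqrt hS.le]
  simp_rw [e]
  rw [← Finset.mul_sum, div_mul_cancel₀ _ hS.ne']

/-- For `X` uniform on the power sphere, `Z` standard Gaussian independent of `X` and
`Y = X + Z`, the squared norm `(1/n)‖Y‖₂²` concentrates around `P + 1`. -/
theorem output_norm_concentration (P : ℝ) (hP : 0 < P) :
    ∃ κ > (0 : ℝ), ∃ N : ℕ, ∀ n : ℕ, n ≥ N →
      ((sphereUniform n P).prod (stdGaussian n))
          {p | |(1 / n : ℝ) * ∑ i, (p.1 i + p.2 i) ^ 2 - (P + 1)| > (n : ℝ) ^ (-(1 / 3) : ℝ)}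
        ≤ ENNReal.ofReal (Real.exp (-κ * (n : ℝ) ^ ((1 : ℝ) / 3))) := by
  set K := 1 + 2*P with hKdef
  have hK1 : (1:ℝ) ≤ K := by simp only [hKdef]; linarith
  have hK0 : (0:ℝ) < K := by linarith
  refine ⟨1/(16*K), by positivity, (⌈16*K⌉₊ + 4)^3, ?_⟩
  intro n hn
  set M := ⌈16*K⌉₊ + 4 with hMdef
  have hM4 : 4 ≤ M := by omega
  have hMK : 16*K ≤ (M:ℝ) := by
    have h := Nat.le_ceil (16*K)
    have : ((⌈16*K⌉₊ : ℕ) : ℝ) ≤ (M:ℝ) := by exact_mod_cast Nat.le_add_right _ 4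
    linarith
  have hn1 : 1 ≤ n := le_trans (Nat.one_le_pow 3 M (by omega)) hn
  have hn0' : (0:ℝ) < n := by exact_mod_cast Nat.lt_of_lt_of_le Nat.zero_lt_one hn1
  set ε := (n:ℝ)^(-(1/3) : ℝ) with hεdef
  set T := (n:ℝ)^((1:ℝ)/3) with hTdef
  have hε0 : 0 ≤ ε := Real.rpow_nonneg hn0'.le _
  have hT0 : 0 < T := Real.rpow_pos_of_pos hn0' _
  have hεT : ε * T = 1 := by
    rw [hεdef, hTdef, ← Real.rpow_add hn0']; norm_num
  have hTM : (M:ℝ) ≤ T := by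
    have e2 : (((M^3 : ℕ)):ℝ) ^ ((1:ℝ)/3) = (M:ℝ) := by
      rw [Nat.cast_pow, ← Real.rpow_natCast (M:ℝ) 3, ← Real.rpow_mul (Nat.cast_nonneg M)]
      norm_num
    rw [← e2, hTdef]
    exact Real.rpow_le_rpow (by positivity) (by exact_mod_cast hn) (by norm_num)
  have hT16K : 16*K ≤ T := le_trans hMK hTM
  have hT4 : (4:ℝ) ≤ T := by
    have : (4:ℝ) ≤ (M:ℝ) := by exact_mod_cast hM4
    linarith
  have hε14 : ε ≤ 1/4 := by nlinarith
  have hnε2 : (n:ℝ) * ε^2 = T := by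
    have h1 : ε^2 = (n:ℝ)^((-(1/3):ℝ)*(2:ℕ)) := by
      rw [hεdef, ← Real.rpow_natCast ((n:ℝ)^(-(1/3):ℝ)) 2, ← Real.rpow_mul hn0'.le]
    rw [h1, hTdef,
      show (n:ℝ) * (n:ℝ)^((-(1/3):ℝ)*(2:ℕ)) = (n:ℝ)^(1:ℝ) * (n:ℝ)^((-(1/3):ℝ)*(2:ℕ)) from by
        rw [Real.rpow_one],
      ← Real.rpow_add hn0']
    norm_num
  set s := ε/(4*K) with hsdef
  have hs0 : 0 ≤ s := by positivity
  have hs110 : s ≤ 1/10 := by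
    rw [hsdef, div_le_iff₀ (by positivity)]
    nlinarith
  -- measurability of the event set
  have hfmeas : Measurable (fun p : (Fin n → ℝ) × (Fin n → ℝ) => ∑ i, (p.1 i + p.2 i)^2) :=
    Finset.measurable_sum _ (fun i _ =>
      (((measurable_pi_apply i).comp measurable_fst).add
        ((measurable_pi_apply i).comp measurable_snd)).pow_const 2)
  have hE : MeasurableSet {p : (Fin n → ℝ) × (Fin n → ℝ) |
      |(1 / n : ℝ) * ∑ i, (p.1 i + p.2 i) ^ 2 - (P + 1)| > ε} := by
    exact measurableSet_lt measurable_const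
      (((measurable_const.mul hfmeas).sub measurable_const).abs)
  rw [Measure.prod_apply hE]
  -- the slice bound
  have hexp : -(s*((n:ℝ)*ε)) + 2*(n:ℝ)*s^2*(1+2*P) = -(T/(8*K)) := by
    rw [hsdef, ← hnε2, ← hKdef]
    field_simp
    ring
  have hbound : ∀ᵐ x ∂(sphereUniform n P),
      (stdGaussian n) (Prod.mk x ⁻¹' {p : (Fin n → ℝ) × (Fin n → ℝ) |
          |(1 / n : ℝ) * ∑ i, (p.1 i + p.2 i) ^ 2 - (P + 1)| > ε})
        ≤ ENNReal.ofReal (2 * rexp (-(T/(8*K)))) := by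
    filter_upwards [ae_sphere n hn1 P hP] with x hx
    have hinv : (1/(n:ℝ)) * (n:ℝ) = 1 := by field_simp
    have hsub : (Prod.mk x ⁻¹' {p : (Fin n → ℝ) × (Fin n → ℝ) |
          |(1 / n : ℝ) * ∑ i, (p.1 i + p.2 i) ^ 2 - (P + 1)| > ε})
        ⊆ {z | (n:ℝ)*(P+1) + (n:ℝ)*ε ≤ ∑ i, (x i + z i)^2}
          ∪ {z | ∑ i, (x i + z i)^2 ≤ (n:ℝ)*(P+1) - (n:ℝ)*ε} := by
      intro z hz
      simp only [Set.mem_preimage, Set.mem_setOf_eq, gt_iff_lt] at hz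
      simp only [Set.mem_union, Set.mem_setOf_eq]
      rcases lt_abs.mp hz with h | h
      · left
        have hdiv : (1/(n:ℝ)) * (∑ i, (x i + z i)^2) = (∑ i, (x i + z i)^2)/(n:ℝ) :=
          one_div_mul_eq_div _ _
        rw [hdiv] at h
        have h2 := (lt_div_iff₀ hn0').mp (by linarith : ε + (P + 1) < (∑ i, (x i + z i)^2)/(n:ℝ))
        nlinarith [h2]
      · right
        have hdiv : (1/(n:ℝ)) * (∑ i, (x i + z i)^2) = (∑ i, (x i + z i)^2)/(n:ℝ) :=
          one_div_mul_eq_div _ _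
        rw [hdiv] at h
        have h2 := (div_lt_iff₀ hn0').mp (by linarith : (∑ i, (x i + z i)^2)/(n:ℝ) < (P + 1) - ε)
        nlinarith [h2]
    have hup := chernoff_up n x hs0 hs110 hP hx ((n:ℝ)*ε)
    have hdn := chernoff_dn n x hs0 hs110 hP hx ((n:ℝ)*ε)
    calc (stdGaussian n) _
        ≤ (stdGaussian n) ({z | (n:ℝ)*(P+1) + (n:ℝ)*ε ≤ ∑ i, (x i + z i)^2}
            ∪ {z | ∑ i, (x i + z i)^2 ≤ (n:ℝ)*(P+1) - (n:ℝ)*ε}) := measure_mono hsub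
      _ ≤ (stdGaussian n) {z | (n:ℝ)*(P+1) + (n:ℝ)*ε ≤ ∑ i, (x i + z i)^2}
            + (stdGaussian n) {z | ∑ i, (x i + z i)^2 ≤ (n:ℝ)*(P+1) - (n:ℝ)*ε} :=
          measure_union_le _ _
      _ ≤ ENNReal.ofReal (rexp (-(s*((n:ℝ)*ε)) + 2*(n:ℝ)*s^2*(1+2*P)))
            + ENNReal.ofReal (rexp (-(s*((n:ℝ)*ε)) + 2*(n:ℝ)*s^2*(1+2*P))) := by
          gcongr
          · rw [← ENNReal.ofReal_toReal (measure_ne_top (stdGaussian n) _)]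
            exact ENNReal.ofReal_le_ofReal hup
          · rw [← ENNReal.ofReal_toReal (measure_ne_top (stdGaussian n) _)]
            exact ENNReal.ofReal_le_ofReal hdn
      _ = ENNReal.ofReal (2 * rexp (-(T/(8*K)))) := by
          rw [← ENNReal.ofReal_add (Real.exp_pos _).le (Real.exp_pos _).le, hexp]
          ring_nf
  calc ∫⁻ x, (stdGaussian n) (Prod.mk x ⁻¹' {p : (Fin n → ℝ) × (Fin n → ℝ) |
          |(1 / n : ℝ) * ∑ i, (p.1 i + p.2 i) ^ 2 - (P + 1)| > ε}) ∂(sphereUniform n P)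
      ≤ ∫⁻ _, ENNReal.ofReal (2 * rexp (-(T/(8*K)))) ∂(sphereUniform n P) :=
        lintegral_mono_ae hbound
    _ = ENNReal.ofReal (2 * rexp (-(T/(8*K)))) := by
        rw [lintegral_const, measure_univ, mul_one]
    _ ≤ ENNReal.ofReal (rexp (-(1/(16*K)) * T)) := by
        apply ENNReal.ofReal_le_ofReal
        have h2 : (2:ℝ) ≤ rexp (T/(16*K)) := by
          have h3 : (1:ℝ) ≤ T/(16*K) := by
            rw [le_div_iff₀ (by positivity)]
            linarith
          linarith [Real.add_one_le_exp (T/(16*K))]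
        have he : rexp (-(1/(16*K)) * T) = rexp (T/(16*K)) * rexp (-(T/(8*K))) := by
          rw [← Real.exp_add]
          congr 1
          field_simp
          ring
        rw [he]
        exact mul_le_mul_of_nonneg_right h2 (Real.exp_pos _).le

end
end

section
/- Let Q be a real-valued random variable, and suppose there exist constants K > 0 and n > 0 such that for every a ∈ ℝ and every μ > 0, Pr( Q ∈ [a, a+μ] ) ≤ K·μ/√n. Then for every t ∈ ℝ, E[ exp(−Q)·1{Q ≥ t} ] ≤ (2·log 2)·K·exp(−t)/√n. -/
open MeasureTheory Real

noncomputable section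

/-- If all interval probabilities `Pr(Q ∈ [a, a+μ])` are bounded by `K μ/√n`, then
`E[exp(-Q) 1{Q ≥ t}] ≤ (2 log 2) K exp(-t)/√n` for every `t`. -/
theorem exp_indicator_expectation_bound
    {Ω : Type*} [MeasurableSpace Ω] (ℙ : Measure Ω) [IsProbabilityMeasure ℙ]
    (Q : Ω → ℝ) (hQ : Measurable Q) (K n : ℝ) (hK : 0 < K) (hn : 0 < n)
    (h : ∀ a μ : ℝ, 0 < μ →
      (ℙ {ω | Q ω ∈ Set.Icc a (a + μ)}).toReal ≤ K * μ / Real.sqrt n) :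
    ∀ t : ℝ,
      ∫ ω in {ω | t ≤ Q ω}, Real.exp (-Q ω) ∂ℙ
        ≤ 2 * Real.log 2 * K * Real.exp (-t) / Real.sqrt n := by
  intro t
  set η := Real.log 2 with hηdef
  have hη : 0 < η := Real.log_pos one_lt_two
  have hs : 0 < Real.sqrt n := Real.sqrt_pos.mpr hn
  set S : ℕ → Set Ω := fun k => {ω | t + k * η ≤ Q ω ∧ Q ω < t + (k + 1) * η} with hS
  have hSm : ∀ k, MeasurableSet (S k) :=
    fun k => (measurableSet_le measurable_const hQ).inter
      (measurableSet_lt hQ measurable_const)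
  have key : ∀ k l : ℕ, k < l → Disjoint (S k) (S l) := by
    intro k l hlt
    refine Set.disjoint_left.mpr fun ω hk hl => ?_
    have h1 : Q ω < t + (k + 1) * η := hk.2
    have h2 : t + l * η ≤ Q ω := hl.1
    have : ((k : ℝ) + 1) * η ≤ l * η := by
      apply mul_le_mul_of_nonneg_right _ hη.le
      exact_mod_cast hlt
    linarith
  have hdisj : Pairwise (Function.onFun Disjoint S) := by
    intro k l hkl
    rcases Ne.lt_or_gt hkl with h' | h'
    · exact key _ _ h'
    · exact (key _ _ h').symm
  have hUnion : (⋃ k, S k) = {ω | t ≤ Q ω} := by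
    ext ω
    simp only [Set.mem_iUnion, Set.mem_setOf_eq, hS]
    constructor
    · rintro ⟨k, h1, _⟩
      have : (0:ℝ) ≤ k * η := mul_nonneg (Nat.cast_nonneg k) hη.le
      linarith
    · intro ht
      refine ⟨⌊(Q ω - t) / η⌋₊, ?_, ?_⟩
      · have := Nat.floor_le (a := (Q ω - t) / η) (div_nonneg (by linarith) hη.le)
        have := (le_div_iff₀ hη).mp this
        linarith
      · have := Nat.lt_floor_add_one ((Q ω - t) / η)
        have := (div_lt_iff₀ hη).mp this
        push_cast
        linarith
  have hA : MeasurableSet {ω | t ≤ Q ω} := measurableSet_le measurable_const hQ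
  -- integrability on the union
  have hbound : ∀ ω ∈ {ω | t ≤ Q ω}, ‖Real.exp (-Q ω)‖ ≤ Real.exp (-t) := by
    intro ω hω
    rw [Real.norm_eq_abs, abs_of_pos (Real.exp_pos _)]
    exact Real.exp_le_exp.mpr (by simpa using hω)
  have hInt : IntegrableOn (fun ω => Real.exp (-Q ω)) {ω | t ≤ Q ω} ℙ := by
    apply Measure.integrableOn_of_bounded (M := Real.exp (-t)) (measure_ne_top _ _)
      ((hQ.neg.exp).aestronglyMeasurable)
    rw [ae_restrict_iff' hA]
    exact Filter.Eventually.of_forall hbound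
  rw [← hUnion] at hInt ⊢
  rw [MeasureTheory.integral_iUnion hSm hdisj hInt]
  have hSsub : ∀ k, S k ⊆ {ω | Q ω ∈ Set.Icc (t + k * η) (t + k * η + η)} := by
    intro k ω hω
    simp only [Set.mem_setOf_eq, Set.mem_Icc]
    constructor
    · exact hω.1
    · have := hω.2.le
      push_cast at this ⊢
      linarith
  have hmeas : ∀ k : ℕ, (ℙ (S k)).toReal ≤ K * η / Real.sqrt n := by
    intro k
    refine le_trans ?_ (h (t + k * η) η hη)
    exact ENNReal.toReal_mono (measure_ne_top _ _) (measure_mono (hSsub k))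
  have hterm : ∀ k : ℕ,
      ∫ ω in S k, Real.exp (-Q ω) ∂ℙ
        ≤ Real.exp (-t) * (1/2 : ℝ)^k * (K * η / Real.sqrt n) := by
    intro k
    have hC : ∀ ω ∈ S k, ‖Real.exp (-Q ω)‖ ≤ Real.exp (-t) * (1/2 : ℝ)^k := by
      intro ω hω
      rw [Real.norm_eq_abs, abs_of_pos (Real.exp_pos _)]
      have : Real.exp (-Q ω) ≤ Real.exp (-(t + k * η)) :=
        Real.exp_le_exp.mpr (by linarith [hω.1])
      refine this.trans_eq ?_
      rw [neg_add, Real.exp_add]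
      congr 1
      rw [show -((k:ℝ) * η) = (k : ℕ) * (-η) by push_cast; ring, Real.exp_nat_mul,
        Real.exp_neg, hηdef, Real.exp_log two_pos]
      norm_num
    have := norm_setIntegral_le_of_norm_le_const (μ := ℙ) (s := S k)
      (measure_lt_top _ _) hC
    refine le_trans (le_abs_self _) ?_
    rw [← Real.norm_eq_abs]
    refine this.trans ?_
    have h1 : (0:ℝ) ≤ Real.exp (-t) * (1/2 : ℝ)^k :=
      mul_nonneg (Real.exp_pos _).le (by positivity)
    exact mul_le_mul_of_nonneg_left (hmeas k) h1
  have hsum : Summable (fun k : ℕ => Real.exp (-t) * (1/2 : ℝ)^k * (K * η / Real.sqrt n)) := by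
    apply Summable.mul_right
    exact (summable_geometric_of_lt_one (by norm_num) (by norm_num)).mul_left _
  have hsumL : Summable (fun k : ℕ => ∫ ω in S k, Real.exp (-Q ω) ∂ℙ) :=
    (hasSum_integral_iUnion hSm hdisj hInt).summable
  refine le_trans (Summable.tsum_le_tsum hterm hsumL hsum) ?_
  have : ∑' k : ℕ, Real.exp (-t) * (1/2 : ℝ)^k * (K * η / Real.sqrt n)
      = Real.exp (-t) * (K * η / Real.sqrt n) * 2 := by
    rw [tsum_mul_right, tsum_mul_left, tsum_geometric_of_lt_one (by norm_num) (by norm_num)]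
    norm_num
    ring
  rw [this]
  refine le_of_eq ?_
  field_simp

end
end

section
/- Fix P > 0 and φ ∈ (0, π/2). Define G(φ) = (1/2)·( √P·cos φ + √(P·cos²φ + 4) ) and F(φ) = P/2 − (√P·G(φ)·cos φ)/2 − log( G(φ)·sin φ ). Define, for R > 0 with β := exp(2R) > 1, the sphere-packing exponent E(R) = (P/(4β))·( (β+1) − (β−1)·√(1 + 4β/(P(β−1))) ) + (1/2)·log( β − (P(β−1)/2)·( √(1 + 4β/(P(β−1))) − 1 ) ). Then F(φ) = E(R̃(φ)) where R̃(φ) = −log sin φ. -/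
open Real

noncomputable section

/-- Shannon's cone-angle exponent `F(φ)` equals the sphere-packing exponent `E(R)` of the
AWGN channel at rate `R̃(φ) = -log sin φ`. -/
theorem shannon_exponent_eq_sphere_packing (P φ : ℝ) (hP : 0 < P)
    (hφ : φ ∈ Set.Ioo (0 : ℝ) (π / 2)) :
    let G : ℝ := (Real.sqrt P * Real.cos φ + Real.sqrt (P * Real.cos φ ^ 2 + 4)) / 2
    let F : ℝ := P / 2 - Real.sqrt P * G * Real.cos φ / 2 - Real.log (G * Real.sin φ)
    let E : ℝ → ℝ := fun R =>
      P / (4 * Real.exp (2 * R)) *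
          ((Real.exp (2 * R) + 1) -
            (Real.exp (2 * R) - 1) *
              Real.sqrt (1 + 4 * Real.exp (2 * R) / (P * (Real.exp (2 * R) - 1)))) +
        (1 / 2) * Real.log (Real.exp (2 * R) -
          P * (Real.exp (2 * R) - 1) / 2 *
            (Real.sqrt (1 + 4 * Real.exp (2 * R) / (P * (Real.exp (2 * R) - 1))) - 1))
    F = E (-Real.log (Real.sin φ)) := by
  intro G F E
  obtain ⟨hφ0, hφπ⟩ := hφ
  have hπ := Real.pi_pos
  have hs : 0 < Real.sin φ := Real.sin_pos_of_pos_of_lt_pi hφ0 (by linarith)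
  have hc : 0 < Real.cos φ := Real.cos_pos_of_mem_Ioo ⟨by linarith, hφπ⟩
  have pyth := Real.sin_sq_add_cos_sq φ
  set s := Real.sin φ with hsdef
  set c := Real.cos φ with hcdef
  have hp0 : 0 < Real.sqrt P := Real.sqrt_pos.mpr hP
  set p := Real.sqrt P with hpdef
  have hp : p ^ 2 = P := Real.sq_sqrt hP.le
  have hD0 : 0 < Real.sqrt (P * c ^ 2 + 4) := Real.sqrt_pos.mpr (by positivity)
  set D := Real.sqrt (P * c ^ 2 + 4) with hDdef
  have hD : D ^ 2 = P * c ^ 2 + 4 := Real.sq_sqrt (by positivity)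
  have hG : G = (p * c + D) / 2 := rfl
  have hGpos : 0 < G := by rw [hG]; positivity
  have hexp : Real.exp (2 * -Real.log s) = 1 / s ^ 2 := by
    rw [show (2 : ℝ) * -Real.log s = Real.log (1 / s ^ 2) by
      rw [one_div, Real.log_inv, Real.log_pow]; push_cast; ring]
    exact Real.exp_log (by positivity)
  have hsq : Real.sqrt (1 + 4 * (1 / s ^ 2) / (P * (1 / s ^ 2 - 1))) = D / (p * c) := by
    rw [show 1 + 4 * (1 / s ^ 2) / (P * (1 / s ^ 2 - 1)) = (D / (p * c)) ^ 2 by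
      rw [div_pow, hD, mul_pow, hp]
      have h1s : 1 / s ^ 2 - 1 = c ^ 2 / s ^ 2 := by
        field_simp; linarith
      rw [h1s]
      field_simp]
    exact Real.sqrt_sq (by positivity)
  have hA : P / (4 * (1 / s ^ 2)) *
      ((1 / s ^ 2 + 1) - (1 / s ^ 2 - 1) * (D / (p * c))) = P / 2 - p * G * c / 2 := by
    rw [hG]
    field_simp
    linear_combination (4 * (p * c + D) * P) * pyth +
      (4 * (p * c + D) * c ^ 2) * hp
  have hL : 1 / s ^ 2 - P * (1 / s ^ 2 - 1) / 2 * (D / (p * c) - 1) = (1 / (G * s)) ^ 2 := by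
    rw [hG]
    field_simp
    have h1 : 1 - s ^ 2 = c ^ 2 := by linarith
    rw [h1, ← hp]
    rw [← hp] at hD
    linear_combination (2 * p * c - (p * c) ^ 3 - (p * c) ^ 2 * D) * hD
  have hlog : Real.log ((1 / (G * s)) ^ 2) = -(2 * Real.log (G * s)) := by
    rw [Real.log_pow, one_div, Real.log_inv]; push_cast; ring
  show P / 2 - p * G * c / 2 - Real.log (G * s) =
    P / (4 * Real.exp (2 * -Real.log s)) *
        ((Real.exp (2 * -Real.log s) + 1) -
          (Real.exp (2 * -Real.log s) - 1) *
            Real.sqrt (1 + 4 * Real.exp (2 * -Real.log s) /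
              (P * (Real.exp (2 * -Real.log s) - 1)))) +
      (1 / 2) * Real.log (Real.exp (2 * -Real.log s) -
        P * (Real.exp (2 * -Real.log s) - 1) / 2 *
          (Real.sqrt (1 + 4 * Real.exp (2 * -Real.log s) /
            (P * (Real.exp (2 * -Real.log s) - 1))) - 1))
  rw [hexp, hsq, hA, hL, hlog]
  ring

end
end
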